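/- For every real p with 0 < p < 1 and all positive integers n and N, the product ∏_{r=1}^{n} (1 - p^{2r})^{N·C(n,r)} is at most 2^{-N·((1+p²)^n - 1)}. -/

import Mathlib

/-- For every real `p` with `0 < p < 1` and all positive integers `n` and `N`,
the product `∏_{r=1}^{n} (1 - p^{2r})^{N·C(n,r)}` is at most `2^{-N·((1+p²)^n - 1)}`. -/
theorem stmt_0 (p : ℝ) (hp0 : 0 < p) (hp1 : p < 1) (n N : ℕ) (hn : 0 < n) (hN : 0 < N) :
    ∏ r ∈ Finset.Icc 1 n, (1 - p ^ (2 * r)) ^ (N * n.choose r) ≤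
      (2 : ℝ) ^ (-((N : ℝ) * ((1 + p ^ 2) ^ n - 1))) := by
  -- the exponent identity
  have hsum : ∑ r ∈ Finset.Icc 1 n, -((N : ℝ) * (n.choose r) * p ^ (2 * r))
      = -((N : ℝ) * ((1 + p ^ 2) ^ n - 1)) := by
    have hins : Finset.range (n + 1) = insert 0 (Finset.Icc 1 n) := by
      ext x; simp [Finset.mem_range, Finset.mem_Icc]; omega
    have hbin : (1 + p ^ 2) ^ n
        = ∑ r ∈ Finset.range (n + 1), (n.choose r : ℝ) * (p ^ 2) ^ r := by
      rw [add_comm, add_pow]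
      exact Finset.sum_congr rfl fun r _ => by ring
    rw [hbin, hins, Finset.sum_insert (by simp)]
    simp only [Nat.choose_zero_right, pow_zero, Nat.cast_one, one_mul]
    rw [add_sub_cancel_left, Finset.mul_sum, ← Finset.sum_neg_distrib]
    refine Finset.sum_congr rfl fun r _ => ?_
    rw [pow_mul]
    ring
  rw [← hsum, Real.rpow_sum_of_pos (by norm_num)]
  refine Finset.prod_le_prod (fun r _ => ?_) (fun r hr => ?_)
  · exact pow_nonneg (by linarith [pow_le_one₀ hp0.le hp1.le (n := 2 * r)]) _
  · have hrpos : 1 ≤ r := (Finset.mem_Icc.mp hr).1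
    set x : ℝ := p ^ (2 * r) with hx
    have hx0 : 0 ≤ x := by positivity
    have hx1 : x < 1 := pow_lt_one₀ hp0.le hp1 (by omega)
    have h1 : 1 - x ≤ (2 : ℝ) ^ (-x) := by
      calc 1 - x ≤ Real.exp (-x) := by linarith [Real.add_one_le_exp (-x)]
        _ ≤ Real.exp (-x * Real.log 2) := by
            apply Real.exp_le_exp.mpr
            nlinarith [Real.log_le_sub_one_of_pos (by norm_num : (0:ℝ) < 2),
              Real.log_pos (by norm_num : (1:ℝ) < 2)]
        _ = (2 : ℝ) ^ (-x) := by
            rw [Real.rpow_def_of_pos (by norm_num)]; ring_nf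
    calc (1 - x) ^ (N * n.choose r) ≤ ((2 : ℝ) ^ (-x)) ^ (N * n.choose r) :=
          pow_le_pow_left₀ (by linarith) h1 _
      _ = (2 : ℝ) ^ (-((N : ℝ) * (n.choose r) * x)) := by
          rw [← Real.rpow_natCast ((2:ℝ) ^ (-x)), ← Real.rpow_mul (by norm_num)]
          push_cast
          ring_nf
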